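/- Let X be a nonzero finite-dimensional real inner product space and let G : X → X be a self-adjoint and invertible linear operator. Then the equation C = (GC)° has at least one nonempty solution, and a solution can be chosen to be a centrally symmetric ellipsoid: there exists a positive definite invertible linear operator A : X → X such that C := {x ∈ X : ⟨Ax, x⟩ ≤ 1} satisfies C = (GC)°. -/

import Mathlib

open scoped RealInnerProductSpace

/-- The polar of a subset `C` of a real inner product space. -/
def polarSet {X : Type*} [NormedAddCommGroup X] [InnerProductSpace ℝ X]
    (C : Set X) : Set X :=
  {y : X | ∀ c ∈ C, ⟪y, c⟫ ≤ 1}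

lemma sum_key {n : ℕ} (a : Fin n → ℝ) (ha : ∀ i, 0 < a i) (f : Fin n → ℝ) :
    (∀ g : Fin n → ℝ, (∑ i, a i * g i ^ 2) ≤ 1 → (∑ i, f i * g i) ≤ 1) ↔
      (∑ i, (a i)⁻¹ * f i ^ 2) ≤ 1 := by
  have hnn : ∀ i, (0:ℝ) ≤ (a i)⁻¹ * f i ^ 2 :=
    fun i => mul_nonneg (inv_nonneg.mpr (ha i).le) (sq_nonneg _)
  constructor
  · intro h
    set s := ∑ i, (a i)⁻¹ * f i ^ 2 with hs
    have hs0 : 0 ≤ s := Finset.sum_nonneg fun i _ => hnn i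
    rcases eq_or_lt_of_le hs0 with h0 | h0
    · rw [← h0]; norm_num
    · have hsq : 0 < Real.sqrt s := Real.sqrt_pos.mpr h0
      have h1 : (∑ i, a i * ((a i)⁻¹ * f i / Real.sqrt s) ^ 2) ≤ 1 := by
        have hcalc : (∑ i, a i * ((a i)⁻¹ * f i / Real.sqrt s) ^ 2)
            = (∑ i, (a i)⁻¹ * f i ^ 2) / s := by
          rw [Finset.sum_div]
          refine Finset.sum_congr rfl fun i _ => ?_
          have e1 : a i * ((a i)⁻¹ * f i / Real.sqrt s) ^ 2
              = (a i * ((a i)⁻¹) ^ 2) * f i ^ 2 / Real.sqrt s ^ 2 := by ring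
          rw [e1, Real.sq_sqrt hs0, sq, ← mul_assoc, mul_inv_cancel₀ (ha i).ne', one_mul]
        rw [hcalc, ← hs, div_self h0.ne']
      have h2 := h _ h1
      have h3 : (∑ i, f i * ((a i)⁻¹ * f i / Real.sqrt s)) = s / Real.sqrt s := by
        rw [hs, Finset.sum_div]
        exact Finset.sum_congr rfl fun i _ => by ring
      rw [h3] at h2
      have h5 : s / Real.sqrt s = Real.sqrt s := by
        rw [eq_comm, eq_div_iff hsq.ne', Real.mul_self_sqrt hs0]
      rw [h5] at h2
      nlinarith [Real.sq_sqrt hs0]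
  · intro hle g hg
    have hcs := Finset.sum_mul_sq_le_sq_mul_sq Finset.univ
      (fun i => Real.sqrt (a i)⁻¹ * f i) (fun i => Real.sqrt (a i) * g i)
    have he : (∑ i, (Real.sqrt (a i)⁻¹ * f i) * (Real.sqrt (a i) * g i)) = ∑ i, f i * g i := by
      refine Finset.sum_congr rfl fun i _ => ?_
      have h1 : Real.sqrt (a i)⁻¹ * Real.sqrt (a i) = 1 := by
        rw [← Real.sqrt_mul (inv_nonneg.mpr (ha i).le), inv_mul_cancel₀ (ha i).ne',
          Real.sqrt_one]
      rw [mul_mul_mul_comm, h1, one_mul]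
    have he1 : (∑ i, (Real.sqrt (a i)⁻¹ * f i) ^ 2) = ∑ i, (a i)⁻¹ * f i ^ 2 := by
      refine Finset.sum_congr rfl fun i _ => ?_
      rw [mul_pow, Real.sq_sqrt (inv_nonneg.mpr (ha i).le)]
    have he2 : (∑ i, (Real.sqrt (a i) * g i) ^ 2) = ∑ i, a i * g i ^ 2 := by
      refine Finset.sum_congr rfl fun i _ => ?_
      rw [mul_pow, Real.sq_sqrt (ha i).le]
    rw [he, he1, he2] at hcs
    have h1 : (0:ℝ) ≤ ∑ i, (a i)⁻¹ * f i ^ 2 := Finset.sum_nonneg fun i _ => hnn i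
    have h2 : (0:ℝ) ≤ ∑ i, a i * g i ^ 2 :=
      Finset.sum_nonneg fun i _ => mul_nonneg (ha i).le (sq_nonneg _)
    nlinarith


theorem stmt15 {X : Type*} [NormedAddCommGroup X] [InnerProductSpace ℝ X]
    [FiniteDimensional ℝ X] [Nontrivial X] (G : X ≃ₗ[ℝ] X)
    (hsa : ∀ x y : X, ⟪G x, y⟫ = ⟪x, G y⟫) :
    ∃ A : X ≃ₗ[ℝ] X,
      (∀ x y : X, ⟪A x, y⟫ = ⟪x, A y⟫) ∧
      (∀ x : X, x ≠ 0 → 0 < ⟪A x, x⟫) ∧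
      {x : X | ⟪A x, x⟫ ≤ 1} =
        polarSet ((G : X → X) '' {x : X | ⟪A x, x⟫ ≤ 1}) := by
  classical
  have hsym : (G : X →ₗ[ℝ] X).IsSymmetric := fun x y => hsa x y
  set n := Module.finrank ℝ X with hn
  let b : OrthonormalBasis (Fin n) ℝ X := hsym.eigenvectorBasis rfl
  let μ : Fin n → ℝ := hsym.eigenvalues rfl
  have hb : ∀ i, G (b i) = μ i • b i := fun i => hsym.apply_eigenvectorBasis rfl i
  have hμ : ∀ i, μ i ≠ 0 := by
    intro i h
    have h1 : G (b i) = 0 := by rw [hb i, h, zero_smul]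
    have h2 : b i ≠ 0 := b.orthonormal.ne_zero i
    exact h2 (by simpa using G.injective (by simpa using h1))
  let a : Fin n → ℝ := fun i => |μ i|
  have ha : ∀ i, 0 < a i := fun i => abs_pos.mpr (hμ i)
  let D : EuclideanSpace ℝ (Fin n) ≃ₗ[ℝ] EuclideanSpace ℝ (Fin n) :=
    WithLp.linearEquiv (p := 2) (K := ℝ) (V := Fin n → ℝ) ≪≫ₗ
    (LinearEquiv.piCongrRight fun i => LinearEquiv.smulOfNeZero ℝ ℝ (a i) (ha i).ne') ≪≫ₗ
    (WithLp.linearEquiv (p := 2) (K := ℝ) (V := Fin n → ℝ)).symm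
  let A : X ≃ₗ[ℝ] X := b.repr.toLinearEquiv ≪≫ₗ D ≪≫ₗ b.repr.symm.toLinearEquiv
  have hAr : ∀ (x : X) (i : Fin n), b.repr (A x) i = a i * b.repr x i := by
    intro x i
    show b.repr (b.repr.symm (D (b.repr x))) i = _
    rw [b.repr.apply_symm_apply]
    rfl
  have hr_inner : ∀ u v : X, ⟪u, v⟫ = ∑ i, b.repr u i * b.repr v i := by
    intro u v
    rw [← b.repr.inner_map_map u v, PiLp.inner_apply]
    simp [RCLike.inner_apply]
    exact Finset.sum_congr rfl fun i _ => mul_comm _ _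
  have hGr : ∀ (x : X) (i : Fin n), b.repr (G x) i = μ i * b.repr x i := by
    intro x i
    rw [b.repr_apply_apply, b.repr_apply_apply, ← hsa (b i) x, hb i, real_inner_smul_left]
  have hAinner : ∀ x y : X, ⟪A x, y⟫ = ∑ i, a i * (b.repr x i * b.repr y i) := by
    intro x y
    rw [hr_inner]
    exact Finset.sum_congr rfl fun i _ => by rw [hAr]; ring
  have hAquad : ∀ x : X, ⟪A x, x⟫ = ∑ i, a i * (b.repr x i) ^ 2 := by
    intro x
    rw [hAinner]
    exact Finset.sum_congr rfl fun i _ => by ring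
  refine ⟨A, ?_, ?_, ?_⟩
  · intro x y
    rw [hAinner, real_inner_comm, hAinner]
    exact Finset.sum_congr rfl fun i _ => by ring
  · intro x hx
    rw [hAquad]
    have hrx : b.repr x ≠ 0 := fun h => hx (by simpa using b.repr.map_eq_zero_iff.mp h)
    obtain ⟨i, hi⟩ : ∃ i, b.repr x i ≠ 0 := by
      by_contra h; push_neg at h; exact hrx (PiLp.ext fun i => by simpa using h i)
    refine Finset.sum_pos' (fun j _ => mul_nonneg (ha j).le (sq_nonneg _))
      ⟨i, Finset.mem_univ i, mul_pos (ha i) (by positivity)⟩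
  · ext y
    simp only [Set.mem_setOf_eq, polarSet, Set.mem_image]
    have hiff : (∀ c : X, ⟪A c, c⟫ ≤ 1 → ⟪y, G c⟫ ≤ 1) ↔ ⟪A y, y⟫ ≤ 1 := by
      have hyGc : ∀ c : X, ⟪y, G c⟫ = ∑ i, (μ i * b.repr y i) * b.repr c i := by
        intro c
        rw [hr_inner]
        exact Finset.sum_congr rfl fun i _ => by rw [hGr]; ring
      have step : (∀ c : X, ⟪A c, c⟫ ≤ 1 → ⟪y, G c⟫ ≤ 1) ↔
          (∀ g : Fin n → ℝ, (∑ i, a i * g i ^ 2) ≤ 1 →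
            (∑ i, (μ i * b.repr y i) * g i) ≤ 1) := by
        constructor
        · intro h g hg
          have := h (b.repr.symm (WithLp.toLp 2 g)) ?_
          · rwa [hyGc, b.repr.apply_symm_apply] at this
          · rw [hAquad, b.repr.apply_symm_apply]
            exact hg
        · intro h c hc
          have := h (fun i => b.repr c i) (by rw [← hAquad]; exact hc)
          rwa [hyGc]
      rw [step, sum_key a ha (fun i => μ i * b.repr y i), hAquad]
      constructor
      · intro h
        refine le_trans (le_of_eq ?_) h
        refine Finset.sum_congr rfl fun i _ => ?_
        have h3 : |μ i| ≠ 0 := (ha i).ne'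
        have h2 : (μ i) ^ 2 = |μ i| ^ 2 := (sq_abs _).symm
        show a i * b.repr y i ^ 2 = (a i)⁻¹ * (μ i * b.repr y i) ^ 2
        show |μ i| * b.repr y i ^ 2 = (|μ i|)⁻¹ * (μ i * b.repr y i) ^ 2
        field_simp
        rw [h2]
        ring
      · intro h
        refine le_trans (le_of_eq ?_) h
        refine Finset.sum_congr rfl fun i _ => ?_
        have h3 : |μ i| ≠ 0 := (ha i).ne'
        have h2 : (μ i) ^ 2 = |μ i| ^ 2 := (sq_abs _).symm
        show (a i)⁻¹ * (μ i * b.repr y i) ^ 2 = a i * b.repr y i ^ 2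
        show (|μ i|)⁻¹ * (μ i * b.repr y i) ^ 2 = |μ i| * b.repr y i ^ 2
        field_simp
        rw [h2]
    constructor
    · intro hy z hz
      obtain ⟨c, hc, rfl⟩ := hz
      exact hiff.mpr hy c hc
    · intro hy
      exact hiff.mp fun c hc => hy (G c) ⟨c, hc, rfl⟩
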